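/- Let ρ and ρ' be CCSs and q, q' ≥ 0 with q + q' ≤ 1, and let ν := q·ρ + q'·ρ' (a CCS). Then for every policy π and every history h = ae_{<t} with Γ_t > 0 and ν(e_{<t} ∣ a_{<t}) > 0, V^π_ν(h) = q·(ρ(e_{<t} ∣ a_{<t})/ν(e_{<t} ∣ a_{<t}))·V^π_ρ(h) + q'·(ρ'(e_{<t} ∣ a_{<t})/ν(e_{<t} ∣ a_{<t}))·V^π_{ρ'}(h), where a summand is read as 0 if the corresponding semimeasure vanishes at h. The same identity holds for histories ending in an action, i.e., for V^π_ν(h a) with a ∈ A. -/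

import Mathlib

open scoped Classical

/-- A history: a finite alternating sequence of action–percept pairs. -/
abbrev Hist (A E : Type*) := List (A × E)

/-- A policy maps histories to actions. -/
abbrev Policy (A E : Type*) := Hist A E → A

/-- A chronological conditional semimeasure (CCS, environment):
values in `[0,1]`, and the chronological semimeasure condition. -/
structure CCS (A E : Type*) [Fintype E] where
  val : Hist A E → ℝ
  nonneg : ∀ h, 0 ≤ val h
  le_one : ∀ h, val h ≤ 1
  chrono : ∀ (h : Hist A E) (a : A), (∑ e : E, val (h ++ [(a, e)])) ≤ val h

/-- `Gam γ t = Γ_t = ∑_{i ≥ t} γ_i`, the discount normalization factor. -/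
noncomputable def Gam (γ : ℕ → ℝ) (t : ℕ) : ℝ := ∑' i : ℕ, γ (t + i)

/-- Extend a history by a list of percepts, with actions chosen by the policy `π`. -/
def extendH {A E : Type*} (π : Policy A E) : Hist A E → List E → Hist A E
  | h, [] => h
  | h, e :: es => extendH π (h ++ [(π h, e)]) es

/-- The value `V^π_ν(ae_{<t})` of policy `π` in environment `ν` given history `h = ae_{<t}`
(with `t = h.length + 1`); `0` whenever `Γ_t ≤ 0` or `ν(e_{<t} ∣ a_{<t}) ≤ 0`. -/
noncomputable def V {A E : Type*} [Fintype E] (γ : ℕ → ℝ) (r : E → ℝ)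
    (π : Policy A E) (ν : CCS A E) (h : Hist A E) : ℝ :=
  if 0 < Gam γ (h.length + 1) ∧ 0 < ν.val h then
    (1 / (Gam γ (h.length + 1) * ν.val h)) *
      ∑' n : ℕ, γ (h.length + 1 + n) *
        ∑ es : Fin (n + 1) → E,
          r (es (Fin.last n)) * ν.val (extendH π h (List.ofFn es))
  else 0

/-- The value `V^π_ν(h a)` of a history ending in the action `a`:
the action at time `t` is `a`, and `π` is followed from time `t+1` on. -/
noncomputable def Vact {A E : Type*} [Fintype E] (γ : ℕ → ℝ) (r : E → ℝ)
    (π : Policy A E) (ν : CCS A E) (h : Hist A E) (a : A) : ℝ :=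
  V γ r (fun h' => if h' = h then a else π h') ν h

/-- The optimal value `V^*_ν(h) = sup_π V^π_ν(h)`. -/
noncomputable def VOpt {A E : Type*} [Fintype E] (γ : ℕ → ℝ) (r : E → ℝ)
    (ν : CCS A E) (h : Hist A E) : ℝ :=
  ⨆ π : Policy A E, V γ r π ν h

/-- The optimal value `V^*_ν(h a)` of a history ending in an action. -/
noncomputable def VOptAct {A E : Type*} [Fintype E] (γ : ℕ → ℝ) (r : E → ℝ)
    (ν : CCS A E) (h : Hist A E) (a : A) : ℝ :=
  ⨆ π : Policy A E, Vact γ r π ν h a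

/-- A history is consistent with `π` iff each of its actions is the one chosen by `π`. -/
def Consistent {A E : Type*} (π : Policy A E) (h : Hist A E) : Prop :=
  ∀ (k : ℕ) (hk : k < h.length), (h.get ⟨k, hk⟩).1 = π (h.take k)


/-- Auxiliary: the expected discounted reward summand at horizon `n`. -/
noncomputable def Ssum {A E : Type*} [Fintype E] (r : E → ℝ)
    (π : Policy A E) (μ : CCS A E) (h : Hist A E) (n : ℕ) : ℝ :=
  ∑ es : Fin (n + 1) → E, r (es (Fin.last n)) * μ.val (extendH π h (List.ofFn es))

theorem V_eq {A E : Type*} [Fintype E] (γ : ℕ → ℝ) (r : E → ℝ)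
    (π : Policy A E) (μ : CCS A E) (h : Hist A E) :
    V γ r π μ h =
      if 0 < Gam γ (h.length + 1) ∧ 0 < μ.val h then
        (1 / (Gam γ (h.length + 1) * μ.val h)) *
          ∑' n : ℕ, γ (h.length + 1 + n) * Ssum r π μ h n
      else 0 := rfl

theorem val_extendH_le {A E : Type*} [Fintype E] (μ : CCS A E) (π : Policy A E) :
    ∀ (es : List E) (h : Hist A E), μ.val (extendH π h es) ≤ μ.val h := by
  intro es
  induction es with
  | nil => intro h; simp [extendH]
  | cons e es ih =>
    intro h
    rw [extendH]
    exact (ih _).trans ((Finset.single_le_sum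
      (f := fun e => μ.val (h ++ [(π h, e)])) (fun i _ => μ.nonneg _)
      (Finset.mem_univ e)).trans (μ.chrono h (π h)))

theorem sum_val_extendH_le {A E : Type*} [Fintype E] (μ : CCS A E) (π : Policy A E) :
    ∀ (n : ℕ) (h : Hist A E),
      (∑ es : Fin (n + 1) → E, μ.val (extendH π h (List.ofFn es))) ≤ μ.val h := by
  intro n
  induction n with
  | zero =>
    intro h
    have e1 : (∑ es : Fin 1 → E, μ.val (extendH π h (List.ofFn es)))
        = ∑ e : E, μ.val (h ++ [(π h, e)]) := by
      rw [← (Equiv.funUnique (Fin 1) E).symm.sum_comp]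
      refine Finset.sum_congr rfl fun e _ => ?_
      simp [extendH, List.ofFn_succ, Equiv.funUnique]
    rw [e1]; exact μ.chrono h (π h)
  | succ n ih =>
    intro h
    have e1 : (∑ es : Fin (n + 2) → E, μ.val (extendH π h (List.ofFn es)))
        = ∑ p : E × (Fin (n + 1) → E),
            μ.val (extendH π (h ++ [(π h, p.1)]) (List.ofFn p.2)) := by
      rw [← (Fin.consEquiv (fun _ : Fin (n + 2) => E)).sum_comp]
      refine Finset.sum_congr rfl fun p _ => ?_
      have : List.ofFn (Fin.cons p.1 p.2 : Fin (n + 2) → E) = p.1 :: List.ofFn p.2 := by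
        simp [List.ofFn_succ]
      simp [Fin.consEquiv, this, extendH]
    rw [e1, Fintype.sum_prod_type]
    calc (∑ e : E, ∑ es : Fin (n + 1) → E,
            μ.val (extendH π (h ++ [(π h, e)]) (List.ofFn es)))
        ≤ ∑ e : E, μ.val (h ++ [(π h, e)]) :=
          Finset.sum_le_sum fun e _ => ih _
      _ ≤ μ.val h := μ.chrono h (π h)

theorem Ssum_nonneg {A E : Type*} [Fintype E] (r : E → ℝ) (hr : ∀ e : E, 0 ≤ r e ∧ r e ≤ 1)
    (π : Policy A E) (μ : CCS A E) (h : Hist A E) (n : ℕ) : 0 ≤ Ssum r π μ h n :=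
  Finset.sum_nonneg fun es _ => mul_nonneg (hr _).1 (μ.nonneg _)

theorem Ssum_le_one {A E : Type*} [Fintype E] (r : E → ℝ) (hr : ∀ e : E, 0 ≤ r e ∧ r e ≤ 1)
    (π : Policy A E) (μ : CCS A E) (h : Hist A E) (n : ℕ) : Ssum r π μ h n ≤ 1 := by
  calc Ssum r π μ h n
      ≤ ∑ es : Fin (n + 1) → E, μ.val (extendH π h (List.ofFn es)) :=
        Finset.sum_le_sum fun es _ =>
          mul_le_of_le_one_left (μ.nonneg _) (hr _).2
    _ ≤ μ.val h := sum_val_extendH_le μ π n h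
    _ ≤ 1 := μ.le_one h

theorem summable_gS {A E : Type*} [Fintype E] (γ : ℕ → ℝ) (hγ0 : ∀ t, 0 ≤ γ t)
    (hγs : Summable γ) (r : E → ℝ) (hr : ∀ e : E, 0 ≤ r e ∧ r e ≤ 1)
    (π : Policy A E) (μ : CCS A E) (h : Hist A E) (t : ℕ) :
    Summable (fun n => γ (t + n) * Ssum r π μ h n) := by
  have hs : Summable (fun n => γ (t + n)) := by
    have := (summable_nat_add_iff t).2 hγs
    simpa [add_comm] using this
  refine Summable.of_nonneg_of_le
    (fun n => mul_nonneg (hγ0 _) (Ssum_nonneg r hr π μ h n)) (fun n => ?_) hs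
  calc γ (t + n) * Ssum r π μ h n ≤ γ (t + n) * 1 :=
        mul_le_mul_of_nonneg_left (Ssum_le_one r hr π μ h n) (hγ0 _)
    _ = γ (t + n) := mul_one _

theorem value_linear_aux {A E : Type*} [Fintype E]
    (γ : ℕ → ℝ) (hγ0 : ∀ t, 0 ≤ γ t) (hγs : Summable γ)
    (r : E → ℝ) (hr : ∀ e : E, 0 ≤ r e ∧ r e ≤ 1)
    (q q' : ℝ) (ρ ρ' ν : CCS A E)
    (hν : ∀ h : Hist A E, ν.val h = q * ρ.val h + q' * ρ'.val h)
    (π : Policy A E) (h : Hist A E)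
    (hΓ : 0 < Gam γ (h.length + 1)) (hpos : 0 < ν.val h) :
    V γ r π ν h =
        q * (ρ.val h / ν.val h) * V γ r π ρ h +
        q' * (ρ'.val h / ν.val h) * V γ r π ρ' h := by
  set t := h.length + 1 with ht
  have hΓne : Gam γ t ≠ 0 := ne_of_gt hΓ
  have hNne : ν.val h ≠ 0 := ne_of_gt hpos
  -- key reformulation for each component
  have key : ∀ μ : CCS A E, (μ.val h / ν.val h) * V γ r π μ h =
      (∑' n : ℕ, γ (t + n) * Ssum r π μ h n) / (Gam γ t * ν.val h) := by
    intro μ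
    by_cases hm : 0 < μ.val h
    · rw [V_eq, if_pos ⟨hΓ, hm⟩, ← ht]
      have hmne : μ.val h ≠ 0 := ne_of_gt hm
      field_simp
    · have hm0 : μ.val h = 0 := le_antisymm (not_lt.1 hm) (μ.nonneg h)
      have hS : ∀ n, Ssum r π μ h n = 0 := by
        intro n
        refine Finset.sum_eq_zero fun es _ => ?_
        have h1 : μ.val (extendH π h (List.ofFn es)) = 0 :=
          le_antisymm ((val_extendH_le μ π _ h).trans_eq hm0) (μ.nonneg _)
        rw [h1, mul_zero]
      have hT : (∑' n : ℕ, γ (t + n) * Ssum r π μ h n) = 0 := by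
        simp [hS]
      rw [hT, hm0, V_eq]
      simp [hm0]
  have hSν : ∀ n, Ssum r π ν h n = q * Ssum r π ρ h n + q' * Ssum r π ρ' h n := by
    intro n
    simp only [Ssum, hν, mul_add, Finset.mul_sum, ← Finset.sum_add_distrib]
    refine Finset.sum_congr rfl fun es _ => ?_
    ring
  have hTν : (∑' n : ℕ, γ (t + n) * Ssum r π ν h n)
      = q * (∑' n : ℕ, γ (t + n) * Ssum r π ρ h n)
        + q' * (∑' n : ℕ, γ (t + n) * Ssum r π ρ' h n) := by
    have e1 : (fun n => γ (t + n) * Ssum r π ν h n)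
        = fun n => q * (γ (t + n) * Ssum r π ρ h n)
            + q' * (γ (t + n) * Ssum r π ρ' h n) := by
      funext n; rw [hSν n]; ring
    rw [e1, Summable.tsum_add ((summable_gS γ hγ0 hγs r hr π ρ h t).mul_left q)
      ((summable_gS γ hγ0 hγs r hr π ρ' h t).mul_left q'),
      tsum_mul_left, tsum_mul_left]
  have lhs : V γ r π ν h = (∑' n : ℕ, γ (t + n) * Ssum r π ν h n) / (Gam γ t * ν.val h) := by
    rw [V_eq, if_pos ⟨hΓ, hpos⟩]; ring
  rw [lhs, hTν]
  have k1 := key ρ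
  have k2 := key ρ'
  calc (q * (∑' n : ℕ, γ (t + n) * Ssum r π ρ h n)
        + q' * (∑' n : ℕ, γ (t + n) * Ssum r π ρ' h n)) / (Gam γ t * ν.val h)
      = q * ((∑' n : ℕ, γ (t + n) * Ssum r π ρ h n) / (Gam γ t * ν.val h))
        + q' * ((∑' n : ℕ, γ (t + n) * Ssum r π ρ' h n) / (Gam γ t * ν.val h)) := by
        ring
    _ = q * ((ρ.val h / ν.val h) * V γ r π ρ h)
        + q' * ((ρ'.val h / ν.val h) * V γ r π ρ' h) := by rw [k1, k2]
    _ = q * (ρ.val h / ν.val h) * V γ r π ρ h +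
        q' * (ρ'.val h / ν.val h) * V γ r π ρ' h := by ring

/-- **Linearity of the value in the environment.** For `ν = q·ρ + q'·ρ'`,
`V^π_ν(h)` is the posterior-weighted combination of `V^π_ρ(h)` and `V^π_{ρ'}(h)`;
likewise for histories ending in an action. -/
theorem value_linear {A E : Type*} [Fintype A] [Nonempty A] [Fintype E] [Nonempty E]
    (γ : ℕ → ℝ) (hγ0 : ∀ t, 0 ≤ γ t) (hγs : Summable γ)
    (r : E → ℝ) (hr : ∀ e : E, 0 ≤ r e ∧ r e ≤ 1)
    (q q' : ℝ) (hq : 0 ≤ q) (hq' : 0 ≤ q') (hqq' : q + q' ≤ 1)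
    (ρ ρ' ν : CCS A E)
    (hν : ∀ h : Hist A E, ν.val h = q * ρ.val h + q' * ρ'.val h)
    (π : Policy A E) (h : Hist A E)
    (hΓ : 0 < Gam γ (h.length + 1)) (hpos : 0 < ν.val h) :
    (V γ r π ν h =
        q * (ρ.val h / ν.val h) * V γ r π ρ h +
        q' * (ρ'.val h / ν.val h) * V γ r π ρ' h) ∧
    (∀ a : A, Vact γ r π ν h a =
        q * (ρ.val h / ν.val h) * Vact γ r π ρ h a +
        q' * (ρ'.val h / ν.val h) * Vact γ r π ρ' h a) := by
  refine ⟨value_linear_aux γ hγ0 hγs r hr q q' ρ ρ' ν hν π h hΓ hpos, fun a => ?_⟩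
  unfold Vact
  exact value_linear_aux γ hγ0 hγs r hr q q' ρ ρ' ν hν _ h hΓ hpos
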